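/- If f is (p+1)-times continuously differentiable with bounded (p+1)-st derivative (|f^{(p+1)}| ≤ M), and K_η is a scaled kernel with compact support in [−η, η] satisfying the moment conditions up to order p, then |(K_η * f)(t) − f(t)| ≤ C · M · η^{p+1} for a constant C depending only on K. -/

import Mathlib

open MeasureTheory

section helpers
open Nat intervalIntegral Finset

lemma bound_of_deriv_bound {F : ℝ → ℝ} {t c : ℝ} {m : ℕ}
    (hF : Differentiable ℝ F) (hF' : Continuous (deriv F))
    (hFt : F t = 0) (hb : ∀ y, |deriv F y| ≤ c * |y - t| ^ m) :
    ∀ y, |F y| ≤ c * |y - t| ^ (m + 1) / (m + 1) := by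
  intro y
  have hcont : ∀ a b : ℝ, IntervalIntegrable (fun u => |deriv F u|) volume a b :=
    fun a b => (hF'.abs).intervalIntegrable a b
  rcases le_total t y with h | h
  · have key : ∫ u in t..y, deriv F u = F y - F t :=
      integral_deriv_eq_sub (fun x _ => hF x) (hF'.intervalIntegrable _ _)
    have h1 : |F y| = |∫ u in t..y, deriv F u| := by rw [key, hFt, sub_zero]
    have h2 : |∫ u in t..y, deriv F u| ≤ ∫ u in t..y, |deriv F u| := by
      simpa [Real.norm_eq_abs] using intervalIntegral.norm_integral_le_integral_norm (f := deriv F) (μ := volume) h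
    have h3 : (∫ u in t..y, |deriv F u|) ≤ ∫ u in t..y, c * (u - t) ^ m := by
      apply integral_mono_on h (hcont t y)
      · exact ((continuous_const.mul ((continuous_id.sub continuous_const).pow m)).intervalIntegrable t y)
      · intro x hx
        calc |deriv F x| ≤ c * |x - t| ^ m := hb x
          _ = c * (x - t) ^ m := by rw [abs_of_nonneg (by linarith [hx.1] : (0:ℝ) ≤ x - t)]
    have h4 : (∫ u in t..y, c * (u - t) ^ m) = c * ((y - t) ^ (m + 1) / (m + 1)) := by
      rw [intervalIntegral.integral_const_mul]
      rw [show (∫ u in t..y, (u - t) ^ m) = ∫ u in t - t..y - t, u ^ m from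
        intervalIntegral.integral_comp_sub_right (fun u => u ^ m) t]
      rw [integral_pow]
      simp
    rw [h1, abs_of_nonneg (by linarith : (0:ℝ) ≤ y - t)]
    calc |∫ u in t..y, deriv F u| ≤ ∫ u in t..y, |deriv F u| := h2
      _ ≤ _ := h3
      _ = _ := by rw [h4]; ring
  · have key : ∫ u in y..t, deriv F u = F t - F y :=
      integral_deriv_eq_sub (fun x _ => hF x) (hF'.intervalIntegrable _ _)
    have h1 : |F y| = |∫ u in y..t, deriv F u| := by rw [key, hFt, zero_sub, abs_neg]
    have h2 : |∫ u in y..t, deriv F u| ≤ ∫ u in y..t, |deriv F u| := by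
      simpa [Real.norm_eq_abs] using intervalIntegral.norm_integral_le_integral_norm (f := deriv F) (μ := volume) h
    have h3 : (∫ u in y..t, |deriv F u|) ≤ ∫ u in y..t, c * (t - u) ^ m := by
      apply integral_mono_on h (hcont y t)
      · exact ((continuous_const.mul ((continuous_const.sub continuous_id).pow m)).intervalIntegrable y t)
      · intro x hx
        calc |deriv F x| ≤ c * |x - t| ^ m := hb x
          _ = c * (t - x) ^ m := by rw [abs_sub_comm, abs_of_nonneg (by linarith [hx.2] : (0:ℝ) ≤ t - x)]
    have h4 : (∫ u in y..t, c * (t - u) ^ m) = c * ((t - y) ^ (m + 1) / (m + 1)) := by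
      rw [intervalIntegral.integral_const_mul]
      rw [show (∫ u in y..t, (t - u) ^ m) = ∫ u in t - t..t - y, u ^ m from
        intervalIntegral.integral_comp_sub_left (fun u => u ^ m) t]
      rw [integral_pow]
      simp
    rw [h1, abs_sub_comm, abs_of_nonneg (by linarith : (0:ℝ) ≤ t - y)]
    calc |∫ u in y..t, deriv F u| ≤ ∫ u in y..t, |deriv F u| := h2
      _ ≤ _ := h3
      _ = _ := by rw [h4]; ring

lemma taylor_bound : ∀ (n : ℕ) (f : ℝ → ℝ) (M : ℝ), ContDiff ℝ (n + 1) f →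
    (∀ x, |iteratedDeriv (n + 1) f x| ≤ M) → ∀ t y : ℝ,
    |f y - ∑ r ∈ Finset.range (n + 1), iteratedDeriv r f t * (y - t) ^ r / (r !)| ≤
      M * |y - t| ^ (n + 1) / ((n + 1)!) := by
  intro n
  induction n with
  | zero =>
    intro f M hf hM t y
    have hM0 : 0 ≤ M := le_trans (abs_nonneg _) (hM 0)
    have hd : Differentiable ℝ f := hf.differentiable (by norm_num)
    have hd' : Continuous (deriv f) := hf.continuous_deriv (by norm_num)
    have hder : deriv (fun y => f y - f t) = deriv f := funext fun z => deriv_sub_const _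
    have hb : ∀ z : ℝ, |deriv (fun y => f y - f t) z| ≤ M * |z - t| ^ 0 := by
      intro z
      rw [hder]
      simpa [← iteratedDeriv_one] using hM z
    have key := bound_of_deriv_bound (F := fun y => f y - f t) (t := t) (c := M) (m := 0)
      (hd.sub_const _) (by rw [hder]; exact hd') (by simp) hb y
    simpa using key
  | succ n ih =>
    intro f M hf hM t y
    have hM0 : 0 ≤ M := le_trans (abs_nonneg _) (hM 0)
    have hf' : ContDiff ℝ ((n+1 : ℕ) + 1) f := by exact_mod_cast hf
    have hdf : Differentiable ℝ f := hf.differentiable (by simp)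
    have hg : ContDiff ℝ (n + 1) (deriv f) := by
      have := (contDiff_succ_iff_deriv.mp hf').2.2
      exact_mod_cast this
    have hMg : ∀ x, |iteratedDeriv (n + 1) (deriv f) x| ≤ M := by
      intro x
      rw [← iteratedDeriv_succ']
      exact hM x
    have IH := ih (deriv f) M hg hMg t
    set F : ℝ → ℝ := fun y => f y - ∑ r ∈ Finset.range (n + 2),
      iteratedDeriv r f t * (y - t) ^ r / (r !) with hFdef
    have hd : ∀ z : ℝ, HasDerivAt F
        (deriv f z - ∑ r ∈ Finset.range (n + 1), iteratedDeriv r (deriv f) t * (z - t) ^ r / (r !)) z := by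
      intro z
      have h1 : HasDerivAt f (deriv f z) z := (hdf z).hasDerivAt
      have h2 : HasDerivAt (fun y => ∑ r ∈ Finset.range (n + 2),
          iteratedDeriv r f t * (y - t) ^ r / (r !))
          (∑ r ∈ Finset.range (n + 2),
            iteratedDeriv r f t * (↑r * (z - t) ^ (r - 1) * 1) / (r !)) z := by
        apply HasDerivAt.fun_sum
        intro r _
        exact ((((hasDerivAt_id z).sub_const t).pow r).const_mul
          (iteratedDeriv r f t)).div_const _
      have h3 : (∑ r ∈ Finset.range (n + 2),
            iteratedDeriv r f t * (↑r * (z - t) ^ (r - 1) * 1) / (r !))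
          = ∑ r ∈ Finset.range (n + 1), iteratedDeriv r (deriv f) t * (z - t) ^ r / (r !) := by
        rw [Finset.sum_range_succ']
        simp only [Nat.cast_zero, zero_mul, mul_one, zero_div, mul_zero, zero_mul, add_zero,
          Nat.cast_ofNat, Nat.factorial_zero]
        apply Finset.sum_congr rfl
        intro r _
        rw [show iteratedDeriv (r + 1) f = iteratedDeriv r (deriv f) from iteratedDeriv_succ']
        rw [Nat.factorial_succ, Nat.add_sub_cancel]
        push_cast
        have : (r : ℝ) + 1 ≠ 0 := by positivity
        field_simp
      rw [hFdef, ← h3]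
      exact h1.sub h2
    have hderivF : deriv F = fun z => deriv f z -
        ∑ r ∈ Finset.range (n + 1), iteratedDeriv r (deriv f) t * (z - t) ^ r / (r !) := by
      funext z; exact (hd z).deriv
    have hFt : F t = 0 := by
      rw [hFdef]
      simp only [Finset.sum_range_succ', sub_self, zero_pow, Nat.succ_ne_zero, ne_eq,
        not_false_iff, mul_zero, zero_div, Finset.sum_const_zero, zero_add, pow_zero, mul_one,
        Nat.factorial_zero, Nat.cast_one, div_one, iteratedDeriv_zero, sub_self]
    have hb : ∀ z, |deriv F z| ≤ (M / ((n + 1)!)) * |z - t| ^ (n + 1) := by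
      intro z
      rw [hderivF]
      calc |deriv f z - ∑ r ∈ Finset.range (n + 1), iteratedDeriv r (deriv f) t * (z - t) ^ r / (r !)|
          ≤ M * |z - t| ^ (n + 1) / ((n + 1)!) := IH z
        _ = (M / ((n + 1)!)) * |z - t| ^ (n + 1) := by ring
    have hFdiff : Differentiable ℝ F := fun z => (hd z).differentiableAt
    have hF'c : Continuous (deriv F) := by
      rw [hderivF]
      apply Continuous.sub (hg.continuous)
      exact continuous_finset_sum _ fun r _ =>
        ((continuous_const.mul ((continuous_id.sub continuous_const).pow r)).div_const _)
    have key := bound_of_deriv_bound hFdiff hF'c hFt hb y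
    push_cast at key
    calc |F y| ≤ M / ((n + 1)!) * |y - t| ^ (n + 1 + 1) / (n + 1 + 1) := key
      _ = M * |y - t| ^ (n + 1 + 1) / ((n + 1 + 1)!) := by
          rw [show ((n + 1 + 1)!) = (n + 1 + 1) * ((n + 1)!) from Nat.factorial_succ _]
          have h1 : ((((n + 1)!) : ℝ)) ≠ 0 := Nat.cast_ne_zero.mpr (Nat.factorial_ne_zero _)
          have h2 : ((n : ℝ) + 1 + 1) ≠ 0 := by positivity
          push_cast
          rw [div_mul_eq_mul_div, div_div, mul_comm ((((n + 1)!) : ℝ))]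

theorem kernel_approximation_error (K : ℝ → ℝ) (p : ℕ)
    (hKc : Continuous K) (hKs : Function.support K ⊆ Set.Icc (-1) 1)
    (h0 : ∫ s, K s = 1)
    (hmom : ∀ r : ℕ, 1 ≤ r → r ≤ p → ∫ s, K s * s ^ r = 0) :
    ∃ C : ℝ, 0 < C ∧ ∀ (η : ℝ), 0 < η → ∀ (f : ℝ → ℝ) (M : ℝ),
      ContDiff ℝ (p + 1) f →
      (∀ x, |iteratedDeriv (p + 1) f x| ≤ M) →
      ∀ t : ℝ, |(∫ s, (1 / η) * K ((t - s) / η) * f s) - f t| ≤ C * M * η ^ (p + 1) := by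
  have hcs : HasCompactSupport K :=
    HasCompactSupport.of_support_subset_isCompact isCompact_Icc hKs
  have hKint : Integrable K := hKc.integrable_of_hasCompactSupport hcs
  have hint : ∀ h : ℝ → ℝ, Continuous h → Integrable (fun u => K u * h u) := by
    intro h hh
    exact (hKc.mul hh).integrable_of_hasCompactSupport (hcs.mul_right)
  set I : ℝ := ∫ s, |K s| with hI
  have hI0 : 0 ≤ I := integral_nonneg fun s => abs_nonneg _
  refine ⟨I / ((p + 1)!) + 1, by positivity, ?_⟩
  intro η hη f M hf hM t
  have hM0 : 0 ≤ M := le_trans (abs_nonneg _) (hM 0)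
  have hfc : Continuous f := hf.continuous
  set G : ℝ → ℝ := fun v => K ((t - v) / η) * f v with hGdef
  -- change of variables
  have cov : (∫ s : ℝ, (1 / η) * K ((t - s) / η) * f s) = ∫ u : ℝ, K u * f (t - η * u) := by
    have s1 : (∫ u : ℝ, K u * f (t - η * u)) = ∫ u : ℝ, G (t + -η * u) := by
      congr 1
      funext u
      rw [hGdef]
      simp only
      rw [show t + -η * u = t - η * u by ring,
        show (t - (t - η * u)) / η = u by field_simp; ring]
    have s2 : (∫ u : ℝ, G (t + -η * u)) = |(-η)⁻¹| • ∫ w : ℝ, G (t + w) :=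
      MeasureTheory.Measure.integral_comp_mul_left (fun w => G (t + w)) (-η)
    have s3 : (∫ w : ℝ, G (t + w)) = ∫ s, G s := integral_add_left_eq_self G t
    have s4 : (∫ s : ℝ, (1 / η) * K ((t - s) / η) * f s) = (1 / η) * ∫ s, G s := by
      rw [hGdef]
      simp_rw [mul_assoc]
      exact MeasureTheory.integral_const_mul _ _
    rw [s4, s1, s2, s3, abs_inv, abs_neg, abs_of_pos hη, smul_eq_mul, one_div]
  -- Taylor polynomial
  set P : ℝ → ℝ := fun u => ∑ r ∈ Finset.range (p + 1),
    iteratedDeriv r f t * (t - η * u - t) ^ r / (r !) with hPdef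
  have hPc : Continuous P := by
    rw [hPdef]
    exact continuous_finset_sum _ fun r _ =>
      (continuous_const.mul (((continuous_const.sub
        (continuous_const.mul continuous_id)).sub continuous_const).pow r)).div_const _
  have hTay : ∀ u : ℝ, |f (t - η * u) - P u| ≤ M * |t - η * u - t| ^ (p + 1) / ((p + 1)!) :=
    fun u => taylor_bound p f M hf hM t (t - η * u)
  have e2 : (∫ u : ℝ, K u * P u) = f t := by
    have expand : ∀ u : ℝ, K u * P u = ∑ r ∈ Finset.range (p + 1),
        (iteratedDeriv r f t * (-η) ^ r / (r !)) * (K u * u ^ r) := by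
      intro u
      rw [hPdef]
      simp only
      rw [Finset.mul_sum]
      apply Finset.sum_congr rfl
      intro r _
      rw [show t - η * u - t = (-η) * u by ring, mul_pow]
      ring
    calc (∫ u : ℝ, K u * P u)
        = ∫ u : ℝ, ∑ r ∈ Finset.range (p + 1),
            (iteratedDeriv r f t * (-η) ^ r / (r !)) * (K u * u ^ r) := by
          congr 1; funext u; exact expand u
      _ = ∑ r ∈ Finset.range (p + 1), ∫ u : ℝ,
            (iteratedDeriv r f t * (-η) ^ r / (r !)) * (K u * u ^ r) :=
          integral_finset_sum _ fun r _ =>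
            ((hint (fun u => u ^ r) (continuous_pow r)).const_mul _)
      _ = ∑ r ∈ Finset.range (p + 1),
            (iteratedDeriv r f t * (-η) ^ r / (r !)) * ∫ u : ℝ, K u * u ^ r :=
          Finset.sum_congr rfl fun r _ => MeasureTheory.integral_const_mul _ _
      _ = f t := by
        rw [Finset.sum_range_succ']
        rw [Finset.sum_eq_zero fun r hr => by
          rw [hmom (r + 1) (Nat.succ_le_succ (Nat.zero_le _))
            (Nat.succ_le_of_lt (Finset.mem_range.mp hr)), mul_zero]]
        simp [h0]
  have hDc : Continuous fun u => f (t - η * u) - P u :=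
    (hfc.comp (continuous_const.sub (continuous_const.mul continuous_id))).sub hPc
  have int1 : Integrable (fun u => K u * (f (t - η * u) - P u)) := hint _ hDc
  have intKf : Integrable (fun u => K u * f (t - η * u)) :=
    hint _ (hfc.comp (continuous_const.sub (continuous_const.mul continuous_id)))
  have intKP : Integrable (fun u => K u * P u) := hint _ hPc
  have split : (∫ u : ℝ, K u * f (t - η * u)) - f t
      = ∫ u : ℝ, K u * (f (t - η * u) - P u) := by
    rw [← e2, ← integral_sub intKf intKP]
    congr 1; funext u; ring
  have hb2 : ∀ u : ℝ, |K u * (f (t - η * u) - P u)| ≤ |K u| * (M * η ^ (p + 1) / ((p + 1)!)) := by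
    intro u
    rw [abs_mul]
    rcases eq_or_ne (K u) 0 with h | h
    · simp [h]
    · have hu : |u| ≤ 1 := by
        have h2 := hKs (Function.mem_support.mpr h)
        rw [Set.mem_Icc] at h2
        exact abs_le.mpr h2
      refine mul_le_mul_of_nonneg_left ?_ (abs_nonneg _)
      have hxu : |t - η * u - t| ≤ η := by
        rw [show t - η * u - t = -(η * u) by ring, abs_neg, abs_mul, abs_of_pos hη]
        nlinarith [abs_nonneg u]
      calc |f (t - η * u) - P u| ≤ M * |t - η * u - t| ^ (p + 1) / ((p + 1)!) := hTay u
        _ ≤ M * η ^ (p + 1) / ((p + 1)!) := by gcongr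
  have habs : |∫ u : ℝ, K u * (f (t - η * u) - P u)|
      ≤ ∫ u : ℝ, |K u| * (M * η ^ (p + 1) / ((p + 1)!)) := by
    calc |∫ u : ℝ, K u * (f (t - η * u) - P u)|
        ≤ ∫ u : ℝ, |K u * (f (t - η * u) - P u)| := by
          simpa only [Real.norm_eq_abs] using
            norm_integral_le_integral_norm (μ := volume)
              (fun u : ℝ => K u * (f (t - η * u) - P u))
      _ ≤ _ := integral_mono int1.abs ((hKint.abs).mul_const _) hb2
  have final : (∫ u : ℝ, |K u| * (M * η ^ (p + 1) / ((p + 1)!)))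
      = I * (M * η ^ (p + 1) / ((p + 1)!)) := MeasureTheory.integral_mul_const _ _
  rw [cov, split]
  calc |∫ u : ℝ, K u * (f (t - η * u) - P u)|
      ≤ I * (M * η ^ (p + 1) / ((p + 1)!)) := by rw [← final]; exact habs
    _ = I / ((p + 1)!) * (M * η ^ (p + 1)) := by ring
    _ ≤ (I / ((p + 1)!) + 1) * (M * η ^ (p + 1)) := by
        refine mul_le_mul_of_nonneg_right (by linarith) (by positivity)
    _ = (I / ((p + 1)!) + 1) * M * η ^ (p + 1) := by ring

end helpers
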